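/- Let n ≥ 1. For each i ∈ {1,…,n} let A_{i1}, …, A_{in} ∈ {0,1}, let p₁, …, pₙ ∈ {0,1}, and set Nᵢ = ∑_{k=1}^{n} A_{ik} and Sᵢ = ∑_{k=1}^{n} A_{ik}·p_k (so Sᵢ ≤ Nᵢ). For each i and each integer h with 0 ≤ h ≤ Nᵢ, define t¹_{ih} = 1{Sᵢ ≥ h}, t²_{ih} = 1{Sᵢ ≤ h}, and u_{ih} = pᵢ·t¹_{ih}·t²_{ih}. Then: (a) (t¹_{ih}, t²_{ih}, u_{ih}) is the unique triple of {0,1}-valued numbers satisfying the linear constraints (Sᵢ − h)/(Nᵢ + 1) < t¹_{ih} ≤ (Sᵢ − h)/(Nᵢ + 1) + 1, (h − Sᵢ)/(Nᵢ + 1) < t²_{ih} ≤ (h − Sᵢ)/(Nᵢ + 1) + 1, and (pᵢ + t¹_{ih} + t²_{ih})/3 − 1 < u_{ih} ≤ (pᵢ + t¹_{ih} + t²_{ih})/3; and (b) for any functions gᵢ : {0,1} × ℕ → ℝ, (1/n)·∑_{i=1}^{n} ∑_{h=0}^{Nᵢ} [ (gᵢ(1,h) − gᵢ(0,h))·u_{ih}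 + gᵢ(0,h)·(t¹_{ih} + t²_{ih} − 1) ] = (1/n)·∑_{i=1}^{n} gᵢ(pᵢ, Sᵢ). -/

import Mathlib

/-- MILP reformulation of empirical welfare maximization under network
interference: (a) the binary variables `t¹, t², u` are uniquely pinned down by
the linear constraints and equal the indicators `1{Sᵢ ≥ h}`, `1{Sᵢ ≤ h}` and the
product `pᵢ·t¹·t²`; (b) the MILP objective evaluated at these variables equals
the empirical welfare `(1/n) ∑ᵢ gᵢ(pᵢ, Sᵢ)`. -/
theorem stmt_12 (n : ℕ) (hn : 1 ≤ n)
    (A : Fin n → Fin n → ℕ) (hA : ∀ i k, A i k = 0 ∨ A i k = 1)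
    (p : Fin n → ℕ) (hp : ∀ i, p i = 0 ∨ p i = 1)
    (N S : Fin n → ℕ)
    (hN : ∀ i, N i = ∑ k, A i k)
    (hS : ∀ i, S i = ∑ k, A i k * p k)
    (T1 T2 U : Fin n → ℕ → ℝ)
    (hT1 : ∀ i h, T1 i h = if h ≤ S i then 1 else 0)
    (hT2 : ∀ i h, T2 i h = if S i ≤ h then 1 else 0)
    (hU : ∀ i h, U i h = (p i : ℝ) * T1 i h * T2 i h) :
    (∀ i : Fin n, ∀ h : ℕ, h ≤ N i →
      ∀ t1 t2 u : ℝ, (t1 = 0 ∨ t1 = 1) → (t2 = 0 ∨ t2 = 1) → (u = 0 ∨ u = 1) →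
        ((((S i : ℝ) - (h : ℝ)) / ((N i : ℝ) + 1) < t1 ∧
            t1 ≤ ((S i : ℝ) - (h : ℝ)) / ((N i : ℝ) + 1) + 1 ∧
            ((h : ℝ) - (S i : ℝ)) / ((N i : ℝ) + 1) < t2 ∧
            t2 ≤ ((h : ℝ) - (S i : ℝ)) / ((N i : ℝ) + 1) + 1 ∧
            ((p i : ℝ) + t1 + t2) / 3 - 1 < u ∧
            u ≤ ((p i : ℝ) + t1 + t2) / 3)
          ↔ (t1 = T1 i h ∧ t2 = T2 i h ∧ u = U i h))) ∧
    (∀ g : Fin n → ℕ → ℕ → ℝ,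
      (1 / n : ℝ) * ∑ i, ∑ h ∈ Finset.range (N i + 1),
        ((g i 1 h - g i 0 h) * U i h + g i 0 h * (T1 i h + T2 i h - 1))
      = (1 / n : ℝ) * ∑ i, g i (p i) (S i)) := by
  have hSN : ∀ i, S i ≤ N i := by
    intro i
    rw [hS, hN]
    apply Finset.sum_le_sum
    intro k _
    rcases hp k with h1 | h1 <;> simp [h1]
  constructor
  · intro i h hhN t1 t2 u ht1 ht2 hu
    have hR : (0:ℝ) < (N i : ℝ) + 1 := by positivity
    have hSreal : (S i : ℝ) ≤ (N i : ℝ) := by exact_mod_cast hSN i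
    have hhreal : (h : ℝ) ≤ (N i : ℝ) := by exact_mod_cast hhN
    have hSnn : (0:ℝ) ≤ (S i : ℝ) := Nat.cast_nonneg _
    have hhnn : (0:ℝ) ≤ (h : ℝ) := Nat.cast_nonneg _
    have hpr : ((p i : ℝ) = 0 ∧ p i = 0) ∨ ((p i : ℝ) = 1 ∧ p i = 1) := by
      rcases hp i with hpi | hpi
      · exact Or.inl ⟨by exact_mod_cast hpi, hpi⟩
      · exact Or.inr ⟨by exact_mod_cast hpi, hpi⟩
    constructor
    · rintro ⟨c1, c2, c3, c4, c5, c6⟩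
      have et1 : t1 = T1 i h := by
        rw [hT1]
        rcases ht1 with rfl | rfl
        · rw [if_neg]
          intro hle
          have h1 : (h : ℝ) ≤ (S i : ℝ) := by exact_mod_cast hle
          have h2 : (0:ℝ) ≤ ((S i : ℝ) - h) / ((N i : ℝ) + 1) :=
            div_nonneg (by linarith) hR.le
          linarith
        · rw [if_pos]
          have h2 : (0:ℝ) ≤ ((S i : ℝ) - h) / ((N i : ℝ) + 1) := by linarith
          have h3 : (0:ℝ) ≤ (S i : ℝ) - h := by
            by_contra hc
            push_neg at hc
            have := div_neg_of_neg_of_pos hc hR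
            linarith
          have h4 : (h : ℝ) ≤ (S i : ℝ) := by linarith
          exact_mod_cast h4
      have et2 : t2 = T2 i h := by
        rw [hT2]
        rcases ht2 with rfl | rfl
        · rw [if_neg]
          intro hle
          have h1 : (S i : ℝ) ≤ (h : ℝ) := by exact_mod_cast hle
          have h2 : (0:ℝ) ≤ ((h : ℝ) - S i) / ((N i : ℝ) + 1) :=
            div_nonneg (by linarith) hR.le
          linarith
        · rw [if_pos]
          have h2 : (0:ℝ) ≤ ((h : ℝ) - S i) / ((N i : ℝ) + 1) := by linarith
          have h3 : (0:ℝ) ≤ (h : ℝ) - S i := by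
            by_contra hc
            push_neg at hc
            have := div_neg_of_neg_of_pos hc hR
            linarith
          have h4 : (S i : ℝ) ≤ (h : ℝ) := by linarith
          exact_mod_cast h4
      refine ⟨et1, et2, ?_⟩
      rw [hU, ← et1, ← et2]
      rcases hpr with ⟨hpr, -⟩ | ⟨hpr, -⟩ <;>
        rcases ht1 with rfl | rfl <;> rcases ht2 with rfl | rfl <;>
        rcases hu with rfl | rfl <;>
        rw [hpr] at c5 c6 ⊢ <;> norm_num at c5 <;> norm_num at c6 <;> (try norm_num) <;> linarith
    · rintro ⟨rfl, rfl, rfl⟩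
      rw [hU, hT1, hT2]
      have hq1 : ((S i : ℝ) - h) / ((N i : ℝ) + 1) < 1 :=
        (div_lt_one hR).mpr (by linarith)
      have hq1' : (-1:ℝ) < ((S i : ℝ) - h) / ((N i : ℝ) + 1) := by
        rw [lt_div_iff₀ hR]; linarith
      have hq2 : ((h : ℝ) - S i) / ((N i : ℝ) + 1) < 1 :=
        (div_lt_one hR).mpr (by linarith)
      have hq2' : (-1:ℝ) < ((h : ℝ) - S i) / ((N i : ℝ) + 1) := by
        rw [lt_div_iff₀ hR]; linarith
      by_cases h1 : h ≤ S i <;> by_cases h2 : S i ≤ h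
      · have hle : (h:ℝ) ≤ S i := by exact_mod_cast h1
        have hge : (S i:ℝ) ≤ h := by exact_mod_cast h2
        have hd1 : (0:ℝ) ≤ ((S i : ℝ) - h) / ((N i : ℝ) + 1) :=
          div_nonneg (by linarith) hR.le
        have hd2 : (0:ℝ) ≤ ((h : ℝ) - S i) / ((N i : ℝ) + 1) :=
          div_nonneg (by linarith) hR.le
        rw [if_pos h1, if_pos h2]
        rcases hpr with ⟨hpr, -⟩ | ⟨hpr, -⟩ <;> rw [hpr] <;>
          exact ⟨by linarith, by linarith, by linarith, by linarith, by linarith, by linarith⟩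
      · have hle : (h:ℝ) ≤ S i := by exact_mod_cast h1
        have hlt : (h:ℝ) < S i := by exact_mod_cast lt_of_not_ge h2
        have hd1 : (0:ℝ) ≤ ((S i : ℝ) - h) / ((N i : ℝ) + 1) :=
          div_nonneg (by linarith) hR.le
        have hd2 : ((h : ℝ) - S i) / ((N i : ℝ) + 1) < 0 :=
          div_neg_of_neg_of_pos (by linarith) hR
        rw [if_pos h1, if_neg h2]
        rcases hpr with ⟨hpr, -⟩ | ⟨hpr, -⟩ <;> rw [hpr] <;>
          exact ⟨by linarith, by linarith, by linarith, by linarith, by linarith, by linarith⟩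
      · have hlt : (S i:ℝ) < h := by exact_mod_cast lt_of_not_ge h1
        have hd1 : ((S i : ℝ) - h) / ((N i : ℝ) + 1) < 0 :=
          div_neg_of_neg_of_pos (by linarith) hR
        have hd2 : (0:ℝ) ≤ ((h : ℝ) - S i) / ((N i : ℝ) + 1) :=
          div_nonneg (by linarith) hR.le
        rw [if_neg h1, if_pos h2]
        rcases hpr with ⟨hpr, -⟩ | ⟨hpr, -⟩ <;> rw [hpr] <;>
          exact ⟨by linarith, by linarith, by linarith, by linarith, by linarith, by linarith⟩
      · omega
  · intro g
    congr 1
    apply Finset.sum_congr rfl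
    intro i _
    have hmem : S i ∈ Finset.range (N i + 1) := Finset.mem_range.mpr (Nat.lt_succ_of_le (hSN i))
    calc ∑ h ∈ Finset.range (N i + 1),
          ((g i 1 h - g i 0 h) * U i h + g i 0 h * (T1 i h + T2 i h - 1))
        = ∑ h ∈ Finset.range (N i + 1),
            (if h = S i then ((g i 1 h - g i 0 h) * (p i : ℝ) + g i 0 h) else 0) := by
          apply Finset.sum_congr rfl
          intro h _
          rw [hU, hT1, hT2]
          by_cases hc : h = S i
          · simp [hc]; try ring
          · rcases Nat.lt_or_ge h (S i) with hlt | hge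
            · simp [le_of_lt hlt, not_le.mpr hlt, hc]
            · have hx : ¬ h ≤ S i := by omega
              simp [hx, hge, hc]
      _ = (g i 1 (S i) - g i 0 (S i)) * (p i : ℝ) + g i 0 (S i) := by
          rw [Finset.sum_ite_eq' _ (S i)
            (fun h => (g i 1 h - g i 0 h) * (p i : ℝ) + g i 0 h), if_pos hmem]
      _ = g i (p i) (S i) := by
          rcases hp i with hpi | hpi <;> rw [hpi] <;> push_cast <;> ring
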